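/- Let Ω ⊂ ℂ^d be a domain satisfying the star condition, and let V ⊂ Ω be a bounded open set. Then for every pair of open Euclidean balls b₁, b₂ in ℂ^d with closure(b₁) ⊂ b₂ ∩ Ω and b₂ ∩ Ωᶜ ≠ ∅, there exists a function f, holomorphic on Ω and bounded on V, such that f|_{b₁} has no bounded holomorphic extension to b₂. -/

import Mathlib

open Set Metric

/-- The star condition for an open connected subset of ℂ^d. -/
def StarCondition {d : ℕ} (Ω : Set (EuclideanSpace ℂ (Fin d))) : Prop :=
  ∀ ζ ∈ frontier Ω, ∀ ε > (0:ℝ), ∃ w : EuclideanSpace ℂ (Fin d),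
    w ∉ closure Ω ∧ ‖w - ζ‖ < ε ∧ ∃ v : EuclideanSpace ℂ (Fin d), v ≠ 0 ∧
      ∀ z : EuclideanSpace ℂ (Fin d), (inner ℂ z v : ℂ) = (inner ℂ w v : ℂ) → z ∉ closure Ω

theorem stmt_9 {d : ℕ} (Ω V : Set (EuclideanSpace ℂ (Fin d)))
    (hΩopen : IsOpen Ω) (hΩconn : IsConnected Ω) (hstar : StarCondition Ω)
    (hVopen : IsOpen V) (hVsub : V ⊆ Ω) (hVbdd : Bornology.IsBounded V)
    (c₁ c₂ : EuclideanSpace ℂ (Fin d)) (r₁ r₂ : ℝ) (hr₁ : 0 < r₁) (hr₂ : 0 < r₂)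
    (hb₁ : closure (ball c₁ r₁) ⊆ ball c₂ r₂ ∩ Ω)
    (hb₂ : (ball c₂ r₂ ∩ Ωᶜ).Nonempty) :
    ∃ f : EuclideanSpace ℂ (Fin d) → ℂ, DifferentiableOn ℂ f Ω ∧
      (∃ M : ℝ, ∀ z ∈ V, ‖f z‖ ≤ M) ∧
      ¬ ∃ F : EuclideanSpace ℂ (Fin d) → ℂ, DifferentiableOn ℂ F (ball c₂ r₂) ∧
          (∃ M : ℝ, ∀ z ∈ ball c₂ r₂, ‖F z‖ ≤ M) ∧
          EqOn F f (ball c₁ r₁) := by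
  -- `b₁ ⊆ Ω ∩ b₂`
  have hball₁ : ball c₁ r₁ ⊆ ball c₂ r₂ ∩ Ω := subset_closure.trans hb₁
  have hc₁ : c₁ ∈ ball c₂ r₂ ∩ Ω := hball₁ (mem_ball_self hr₁)
  -- find a frontier point of Ω inside b₂
  obtain ⟨ζ, hζb, hζf⟩ : ∃ ζ, ζ ∈ ball c₂ r₂ ∧ ζ ∈ frontier Ω := by
    by_contra h
    push_neg at h
    have hpre : IsPreconnected (ball c₂ r₂) := (convex_ball c₂ r₂).isPreconnected
    have hcover : ball c₂ r₂ ⊆ Ω ∪ (closure Ω)ᶜ := by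
      intro x hx
      rcases Classical.em (x ∈ closure Ω) with hxc | hxc
      · left
        by_contra hxΩ
        exact h x hx ⟨hxc, fun hxi => hxΩ (interior_subset hxi)⟩
      · exact Or.inr hxc
    obtain ⟨y, hy⟩ := hb₂
    have := hpre Ω (closure Ω)ᶜ hΩopen isClosed_closure.isOpen_compl hcover
      ⟨c₁, hc₁.1, hc₁.2⟩ ⟨y, hy.1, fun hyc => (h y hy.1) ⟨hyc, fun hyi => hy.2 (interior_subset hyi)⟩⟩
    obtain ⟨z, _, hz₁, hz₂⟩ := this
    exact hz₂ (subset_closure hz₁)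
  -- apply the star condition with a small ε
  have hε : (0:ℝ) < r₂ - dist ζ c₂ := by
    have := mem_ball.mp hζb; linarith
  obtain ⟨w, hwcl, hwζ, v, hv, hH⟩ := hstar ζ hζf _ hε
  have hwb₂ : w ∈ ball c₂ r₂ := by
    have : dist w c₂ ≤ dist w ζ + dist ζ c₂ := dist_triangle w ζ c₂
    have hd : dist w ζ < r₂ - dist ζ c₂ := by rwa [dist_eq_norm]
    rw [mem_ball]; linarith
  -- the denominator
  set g : EuclideanSpace ℂ (Fin d) → ℂ :=
    fun z => (inner ℂ v z : ℂ) - (inner ℂ v w : ℂ) with hg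
  have hgdiff : Differentiable ℂ g := by
    have : Differentiable ℂ fun z : EuclideanSpace ℂ (Fin d) => (inner ℂ v z : ℂ) :=
      (innerSL ℂ v).differentiable
    exact this.sub_const _
  have hgne : ∀ z, z ∈ closure Ω → g z ≠ 0 := by
    intro z hz hz0
    have : (inner ℂ v z : ℂ) = (inner ℂ v w : ℂ) := by
      have := sub_eq_zero.mp hz0; exact this
    have h2 : (inner ℂ z v : ℂ) = (inner ℂ w v : ℂ) := by
      have := congrArg (starRingEnd ℂ) this
      rwa [inner_conj_symm, inner_conj_symm] at this
    exact hH z h2 hz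
  refine ⟨fun z => (g z)⁻¹, ?_, ?_, ?_⟩
  · exact (hgdiff.differentiableOn).inv (fun z hz => hgne z (subset_closure hz))
  · -- boundedness on V
    have hc : IsCompact (closure V) := hVbdd.isCompact_closure
    have hcont : ContinuousOn (fun z => (g z)⁻¹) (closure V) := by
      refine (hgdiff.continuous.continuousOn).inv₀ ?_
      intro z hz
      exact hgne z (closure_mono hVsub hz)
    obtain ⟨M, hM⟩ := hc.exists_bound_of_continuousOn hcont
    exact ⟨M, fun z hz => hM z (subset_closure hz)⟩
  · -- no bounded extension
    rintro ⟨F, hFdiff, -, hFeq⟩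
    -- h := g * F - 1 is holomorphic on b₂ and vanishes on b₁
    have hhdiff : DifferentiableOn ℂ (fun z => g z * F z - 1) (ball c₂ r₂) :=
      ((hgdiff.differentiableOn).mul hFdiff).sub_const 1
    have hzero : ∀ z ∈ ball c₁ r₁, g z * F z - 1 = 0 := by
      intro z hz
      have hzΩ : z ∈ Ω := (hball₁ hz).2
      have hgz : g z ≠ 0 := hgne z (subset_closure hzΩ)
      rw [hFeq hz, mul_inv_cancel₀ hgz, sub_self]
    -- slice along the complex line from c₁ to w
    set u : EuclideanSpace ℂ (Fin d) := w - c₁ with hu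
    set ψ : ℂ → EuclideanSpace ℂ (Fin d) := fun lam => c₁ + lam • u with hψ
    have hψdiff : Differentiable ℂ ψ :=
      (differentiable_const c₁).add (differentiable_id.smul_const u)
    have hψ0 : ψ 0 = c₁ := by simp [hψ]
    have hψ1 : ψ 1 = w := by simp [hψ, hu]
    set s : Set ℂ := ψ ⁻¹' (ball c₂ r₂) with hs
    have hsopen : IsOpen s := isOpen_ball.preimage hψdiff.continuous
    have h0s : (0:ℂ) ∈ s := by simpa [hs, hψ0] using hc₁.1
    have h1s : (1:ℂ) ∈ s := by simpa [hs, hψ1] using hwb₂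
    have hsconv : Convex ℝ s := by
      intro x hx y hy a b ha hb hab
      have habC : (a:ℂ) + (b:ℂ) = 1 := by exact_mod_cast hab
      have key : ψ (a • x + b • y) = a • ψ x + b • ψ y := by
        rw [hψ]
        simp only [← Complex.coe_smul, Complex.real_smul]
        match_scalars
        all_goals simp only [smul_eq_mul]
        all_goals first
          | ring1
          | linear_combination habC
          | linear_combination -habC
          | linear_combination (2:ℂ) * habC
          | linear_combination (-2:ℂ) * habC
      have hx' : ψ x ∈ ball c₂ r₂ := hx
      have hy' : ψ y ∈ ball c₂ r₂ := hy
      have hmem := (convex_ball c₂ r₂) hx' hy' ha hb hab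
      show ψ (a • x + b • y) ∈ ball c₂ r₂
      rw [key]; exact hmem
    have hcomp : DifferentiableOn ℂ (fun lam => g (ψ lam) * F (ψ lam) - 1) s := by
      apply DifferentiableOn.comp hhdiff (hψdiff.differentiableOn)
      exact fun lam hlam => hlam
    have hana : AnalyticOnNhd ℂ (fun lam => g (ψ lam) * F (ψ lam) - 1) s :=
      hcomp.analyticOnNhd hsopen
    have hev : (fun lam => g (ψ lam) * F (ψ lam) - 1) =ᶠ[nhds 0] 0 := by
      have hmem : ψ ⁻¹' (ball c₁ r₁) ∈ nhds (0:ℂ) := by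
        apply (isOpen_ball.preimage hψdiff.continuous).mem_nhds
        simp [hψ0, mem_ball_self hr₁]
      filter_upwards [hmem] with lam hlam
      exact hzero _ hlam
    have heq := hana.eqOn_zero_of_preconnected_of_eventuallyEq_zero
      hsconv.isPreconnected h0s hev
    have hw0 : g (ψ 1) * F (ψ 1) - 1 = 0 := heq h1s
    rw [hψ1] at hw0
    have : g w = 0 := by simp [hg]
    rw [this, zero_mul, zero_sub] at hw0
    exact one_ne_zero (neg_eq_zero.mp hw0)
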